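/- Let V be a 4-dimensional real vector space and B a symmetric bilinear form on V of signature (2,2), i.e. there exists a basis (e₀, e₁, e₂, e₃) of V with B(eᵢ, eⱼ) = 0 for i ≠ j, B(e₀, e₀) = B(e₁, e₁) = 1 and B(e₂, e₂) = B(e₃, e₃) = -1. Let X, Y ∈ V be linearly independent vectors with B(X, X) = B(Y, Y) = B(X, Y) = 0. Then there exists a linear endomorphism J : V → V with J ∘ J = -id, B(Jx, Jy) = B(x, y) for all x, y ∈ V, and J X = Y. -/

import Mathlib

/-- Pointwise existence part of Lemma 6: a split-signature `(2,2)` symmetric bilinear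
form on a `4`-dimensional real vector space together with two orthogonal, linearly
independent null vectors `X, Y` admits a compatible complex structure `J` with `JX = Y`. -/
theorem stmt_5 (V : Type*) [AddCommGroup V] [Module ℝ V]
    (B : V →ₗ[ℝ] V →ₗ[ℝ] ℝ) (hsymm : ∀ x y, B x y = B y x)
    (hsig : ∃ e : Module.Basis (Fin 4) ℝ V,
      (∀ i j, i ≠ j → B (e i) (e j) = 0) ∧
      B (e 0) (e 0) = 1 ∧ B (e 1) (e 1) = 1 ∧
      B (e 2) (e 2) = -1 ∧ B (e 3) (e 3) = -1)
    (X Y : V) (hXY : LinearIndependent ℝ ![X, Y])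
    (hX : B X X = 0) (hY : B Y Y = 0) (hXYorth : B X Y = 0) :
    ∃ J : V →ₗ[ℝ] V, J ∘ₗ J = -LinearMap.id ∧
      (∀ x y, B (J x) (J y) = B x y) ∧ J X = Y := by
  obtain ⟨e, horth, h0, h1, h2, h3⟩ := hsig
  have : Module.Finite ℝ V := Module.Finite.of_basis e
  -- nondegeneracy
  have hnd : ∀ v : V, (∀ w, B v w = 0) → v = 0 := by
    intro v hv
    have hrep : ∀ j, e.repr v j = 0 := by
      intro j
      have hv' : B v (e j) = 0 := hv _
      have hexp : B v (e j) = e.repr v j * B (e j) (e j) := by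
        conv_lhs => rw [← e.sum_repr v]
        rw [map_sum, LinearMap.sum_apply]
        rw [Finset.sum_eq_single j (fun i _ hij => by simp [horth i j hij])
          (by simp)]
        simp
      have hne : B (e j) (e j) ≠ 0 := by
        fin_cases j <;> simp [h0, h1, h2, h3]
      have h' := hexp ▸ hv'
      exact (mul_eq_zero.mp h').resolve_right hne
    have hz : e.repr v = 0 := by ext j; simpa using hrep j
    exact e.repr.map_eq_zero_iff.mp hz
  have hYX : B Y X = 0 := (hsymm X Y) ▸ hXYorth
  have hX0 : X ≠ 0 := hXY.ne_zero 0
  have hpair : ∀ s t : ℝ, s • X + t • Y = 0 → s = 0 ∧ t = 0 :=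
    LinearIndependent.pair_iff.mp hXY
  -- existence of dual vectors v, w
  have hv : ∃ v, B X v = 1 ∧ B Y v = 0 := by
    obtain ⟨u, hu⟩ : ∃ u, B X u ≠ 0 := by
      by_contra h
      push_neg at h
      exact hX0 (hnd X h)
    set u₁ := (B X u)⁻¹ • u with hu₁
    have hfu₁ : B X u₁ = 1 := by simp [hu₁, inv_mul_cancel₀ hu]
    by_cases hc : ∃ w, B X w = 0 ∧ B Y w ≠ 0
    · obtain ⟨w0, hw1, hw2⟩ := hc
      refine ⟨u₁ - (B Y u₁ / B Y w0) • w0, ?_, ?_⟩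
      · simp [map_sub, map_smul, hfu₁, hw1]
      · have hdm := div_mul_cancel₀ (B Y u₁) hw2
        simp only [map_sub, map_smul, smul_eq_mul, hdm, sub_self]
    · push_neg at hc
      exfalso
      set c := B Y u₁ with hcdef
      have hall : ∀ z, B (Y - c • X) z = 0 := by
        intro z
        have hk : B X (z - (B X z) • u₁) = 0 := by
          simp [map_sub, map_smul, hfu₁]
        have h' := hc _ hk
        simp only [map_sub, map_smul, smul_eq_mul] at h'
        simp only [map_sub, map_smul, LinearMap.sub_apply, LinearMap.smul_apply,
          smul_eq_mul]
        rw [← hcdef] at h'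
        linarith
      have hYc : Y = c • X := by
        have := hnd _ hall
        rwa [sub_eq_zero] at this
      have := hpair (-c) 1 (by rw [neg_smul, one_smul, hYc]; abel)
      exact one_ne_zero this.2
  have hw : ∃ w, B X w = 0 ∧ B Y w = 1 := by
    obtain ⟨u, hu⟩ : ∃ u, B Y u ≠ 0 := by
      by_contra h
      push_neg at h
      exact (hXY.ne_zero 1) (hnd Y h)
    set u₁ := (B Y u)⁻¹ • u with hu₁
    have hfu₁ : B Y u₁ = 1 := by simp [hu₁, inv_mul_cancel₀ hu]
    by_cases hc : ∃ w, B Y w = 0 ∧ B X w ≠ 0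
    · obtain ⟨w0, hw1, hw2⟩ := hc
      refine ⟨u₁ - (B X u₁ / B X w0) • w0, ?_, ?_⟩
      · have hdm := div_mul_cancel₀ (B X u₁) hw2
        simp only [map_sub, map_smul, smul_eq_mul, hdm, sub_self]
      · simp [map_sub, map_smul, hfu₁, hw1]
    · push_neg at hc
      exfalso
      set c := B X u₁ with hcdef
      have hall : ∀ z, B (X - c • Y) z = 0 := by
        intro z
        have hk : B Y (z - (B Y z) • u₁) = 0 := by
          simp [map_sub, map_smul, hfu₁]
        have h' := hc _ hk
        simp only [map_sub, map_smul, smul_eq_mul] at h'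
        simp only [map_sub, map_smul, LinearMap.sub_apply, LinearMap.smul_apply,
          smul_eq_mul]
        rw [← hcdef] at h'
        linarith
      have hXc : X = c • Y := by
        have := hnd _ hall
        rwa [sub_eq_zero] at this
      have := hpair 1 (-c) (by rw [neg_smul, one_smul, hXc]; abel)
      exact one_ne_zero this.1
  obtain ⟨v, hXv, hYv⟩ := hv
  obtain ⟨w, hXw, hYw⟩ := hw
  have hvX : B v X = 1 := (hsymm X v) ▸ hXv
  have hvY : B v Y = 0 := (hsymm Y v) ▸ hYv
  have hwX : B w X = 0 := (hsymm X w) ▸ hXw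
  have hwY : B w Y = 1 := (hsymm Y w) ▸ hYw
  set X' := v - (B v v / 2) • X with hX'def
  set Y'₀ := w - (B w w / 2) • Y with hY'₀def
  have hXX' : B X X' = 1 := by simp [hX'def, map_sub, map_smul, hXv, hX]
  have hYX' : B Y X' = 0 := by simp [hX'def, map_sub, map_smul, hYv, hYX]
  have hX'X' : B X' X' = 0 := by
    simp only [hX'def, map_sub, map_smul, LinearMap.sub_apply, LinearMap.smul_apply,
      smul_eq_mul, hvX, hX, hXv]
    ring
  have hX'X : B X' X = 1 := (hsymm X X') ▸ hXX'
  have hX'Y : B X' Y = 0 := (hsymm Y X') ▸ hYX'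
  have hXY'₀ : B X Y'₀ = 0 := by simp [hY'₀def, map_sub, map_smul, hXw, hXYorth]
  have hYY'₀ : B Y Y'₀ = 1 := by simp [hY'₀def, map_sub, map_smul, hYw, hY]
  have hY'₀Y'₀ : B Y'₀ Y'₀ = 0 := by
    simp only [hY'₀def, map_sub, map_smul, LinearMap.sub_apply, LinearMap.smul_apply,
      smul_eq_mul, hwY, hY, hYw]
    ring
  have hY'₀X : B Y'₀ X = 0 := (hsymm X Y'₀) ▸ hXY'₀
  set c := B X' Y'₀ with hcdef
  set Y' := Y'₀ - c • X with hY'def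
  have hXY' : B X Y' = 0 := by simp [hY'def, map_sub, map_smul, hXY'₀, hX]
  have hYY' : B Y Y' = 1 := by simp [hY'def, map_sub, map_smul, hYY'₀, hYX]
  have hX'Y' : B X' Y' = 0 := by
    simp [hY'def, map_sub, map_smul, ← hcdef, hX'X]
  have hY'Y' : B Y' Y' = 0 := by
    simp only [hY'def, map_sub, map_smul, LinearMap.sub_apply, LinearMap.smul_apply,
      smul_eq_mul, hY'₀Y'₀, hY'₀X, hXY'₀, hX]
    ring
  have hY'X : B Y' X = 0 := (hsymm X Y') ▸ hXY'
  have hY'Y : B Y' Y = 1 := (hsymm Y Y') ▸ hYY'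
  have hY'X' : B Y' X' = 0 := (hsymm X' Y') ▸ hX'Y'
  -- the family
  set f : Fin 4 → V := ![X, Y, X', Y'] with hfdef
  have hf0 : f 0 = X := rfl
  have hf1 : f 1 = Y := rfl
  have hf2 : f 2 = X' := rfl
  have hf3 : f 3 = Y' := rfl
  have hli : LinearIndependent ℝ f := by
    rw [Fintype.linearIndependent_iff]
    intro g hg
    rw [Fin.sum_univ_four] at hg
    rw [hf0, hf1, hf2, hf3] at hg
    have e0 : g 0 = 0 := by
      have := congrArg (fun z => B z X') hg
      simpa [map_add, map_smul, hXX', hYX', hX'X', hY'X'] using this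
    have e1 : g 1 = 0 := by
      have := congrArg (fun z => B z Y') hg
      simpa [map_add, map_smul, hXY', hYY', hX'Y', hY'Y'] using this
    have e2 : g 2 = 0 := by
      have := congrArg (fun z => B z X) hg
      simpa [map_add, map_smul, hX, hYX, hX'X, hY'X] using this
    have e3 : g 3 = 0 := by
      have := congrArg (fun z => B z Y) hg
      simpa [map_add, map_smul, hXYorth, hY, hX'Y, hY'Y] using this
    intro i; fin_cases i <;> assumption
  have hcard : Fintype.card (Fin 4) = Module.finrank ℝ V := by
    rw [Module.finrank_eq_card_basis e]
  set b : Module.Basis (Fin 4) ℝ V := basisOfLinearIndependentOfCardEqFinrank hli hcard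
    with hbdef
  have hb : ∀ i, b i = f i := by
    intro i
    rw [hbdef, coe_basisOfLinearIndependentOfCardEqFinrank]
  set gJ : Fin 4 → V := ![Y, -X, Y', -X'] with hgdef
  set J : V →ₗ[ℝ] V := b.constr ℝ gJ with hJdef
  have hJb : ∀ i, J (b i) = gJ i := fun i => b.constr_basis ℝ gJ i
  have hJX : J X = Y := by have := hJb 0; rwa [hb 0, hf0] at this
  have hJY : J Y = -X := by have := hJb 1; rwa [hb 1, hf1] at this
  have hJX' : J X' = Y' := by have := hJb 2; rwa [hb 2, hf2] at this
  have hJY' : J Y' = -X' := by have := hJb 3; rwa [hb 3, hf3] at this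
  refine ⟨J, ?_, ?_, hJX⟩
  · apply b.ext
    intro i
    fin_cases i <;>
      simp [hb, hf0, hf1, hf2, hf3, hJX, hJY, hJX', hJY']
  · have key : B.compl₁₂ J J = B := by
      apply b.ext
      intro i
      apply b.ext
      intro j
      fin_cases i <;> fin_cases j <;>
        simp [LinearMap.compl₁₂_apply, hb, hf0, hf1, hf2, hf3, hJX, hJY, hJX', hJY',
          hX, hY, hXYorth, hYX, hXX', hYX', hX'X', hY'X', hXY', hYY', hX'Y', hY'Y',
          hX'X, hX'Y, hY'X, hY'Y]
    intro x y
    have h1 := DFunLike.congr_fun key x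
    have h2 := DFunLike.congr_fun h1 y
    simpa [LinearMap.compl₁₂_apply] using h2
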